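/- (Proposition 1) Consider a single agent that queries d bins, chosen independently and uniformly at random (with replacement) from a set of n bins (n ≥ 1), of which a fixed subset S of k bins is available (k ≥ 1). If the agent finds at least one available bin, it selects one bin uniformly at random from Q, the set of available bins it found. Then for every available bin j ∈ S, the probability that the agent selects bin j equals (1/k) · Pr(Q ≠ ∅) = (1/k) · (1 - ((n-k)/n)^d). Equivalently, conditioned on the agent being potentially happy, it selects each fixed available bin j with probability exactly 1/k. Formally: (1/n^d) · Σ over functions g : Fin d → Fin n with j ∈ Q(g) of 1/|Q(g)| equals (1/k) · (1 - ((n-k)/n)^d). -/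

import Mathlib

open Finset

lemma Q_comp {n d : ℕ} (S : Finset (Fin n)) (σ : Equiv.Perm (Fin n))
    (hσ : S.image σ = S) (g : Fin d → Fin n) :
    Finset.image (σ ∘ g) Finset.univ ∩ S
      = (Finset.image g Finset.univ ∩ S).image σ := by
  rw [Finset.image_inter _ _ σ.injective, hσ, ← Finset.image_image]

lemma swap_image {n : ℕ} (S : Finset (Fin n)) (j j' : Fin n)
    (hj : j ∈ S) (hj' : j' ∈ S) : S.image (Equiv.swap j j') = S := by
  apply Finset.eq_of_subset_of_card_le
  · intro x hx
    rcases Finset.mem_image.1 hx with ⟨a, ha, rfl⟩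
    rcases eq_or_ne a j with rfl | h1
    · simpa [Equiv.swap_apply_left] using hj'
    rcases eq_or_ne a j' with rfl | h2
    · simpa [Equiv.swap_apply_right] using hj
    · rwa [Equiv.swap_apply_of_ne_of_ne h1 h2]
  · rw [Finset.card_image_of_injective _ (Equiv.swap j j').injective]

lemma sym {n d : ℕ} (S : Finset (Fin n)) (j j' : Fin n)
    (hj : j ∈ S) (hj' : j' ∈ S) :
    ∑ g ∈ Finset.univ.filter
        (fun g : Fin d → Fin n => j ∈ Finset.image g Finset.univ ∩ S),
      (1 / ((Finset.image g Finset.univ ∩ S).card : ℝ))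
    = ∑ g ∈ Finset.univ.filter
        (fun g : Fin d → Fin n => j' ∈ Finset.image g Finset.univ ∩ S),
      (1 / ((Finset.image g Finset.univ ∩ S).card : ℝ)) := by
  set σ := Equiv.swap j j'
  have hσ : S.image σ = S := swap_image S j j' hj hj'
  apply Finset.sum_nbij' (fun g => σ ∘ g) (fun g => σ ∘ g)
  · intro g hg
    simp only [Finset.mem_filter, Finset.mem_univ, true_and] at hg ⊢
    rw [Q_comp S σ hσ, Finset.mem_image]
    exact ⟨j, hg, Equiv.swap_apply_left j j'⟩
  · intro g hg
    simp only [Finset.mem_filter, Finset.mem_univ, true_and] at hg ⊢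
    rw [Q_comp S σ hσ, Finset.mem_image]
    exact ⟨j', hg, Equiv.swap_apply_right j j'⟩
  · intro g _; funext i; simp [σ]
  · intro g _; funext i; simp [σ]
  · intro g _
    rw [Q_comp S σ hσ, Finset.card_image_of_injective _ σ.injective]

lemma count_lemma (n d k : ℕ) (S : Finset (Fin n)) (hS : S.card = k) :
    ∑ j' ∈ S, ∑ g ∈ Finset.univ.filter
        (fun g : Fin d → Fin n => j' ∈ Finset.image g Finset.univ ∩ S),
      (1 / ((Finset.image g Finset.univ ∩ S).card : ℝ))
    = ((n ^ d - (n - k) ^ d : ℕ) : ℝ) := by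
  have swap : ∀ j' : Fin n, ∑ g ∈ Finset.univ.filter
        (fun g : Fin d → Fin n => j' ∈ Finset.image g Finset.univ ∩ S),
      (1 / ((Finset.image g Finset.univ ∩ S).card : ℝ))
      = ∑ g : Fin d → Fin n, (if j' ∈ Finset.image g Finset.univ ∩ S
          then (1 / ((Finset.image g Finset.univ ∩ S).card : ℝ)) else 0) := by
    intro j'; rw [Finset.sum_filter]
  simp only [swap]
  rw [Finset.sum_comm]
  have step1 : ∀ g : Fin d → Fin n,
      ∑ j'' ∈ S, (if j'' ∈ Finset.image g Finset.univ ∩ S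
          then (1 / ((Finset.image g Finset.univ ∩ S).card : ℝ)) else 0)
      = if (Finset.image g Finset.univ ∩ S).Nonempty then 1 else 0 := by
    intro g
    rw [← Finset.sum_filter]
    have hfe : S.filter (fun j'' => j'' ∈ Finset.image g Finset.univ ∩ S)
        = Finset.image g Finset.univ ∩ S := by
      ext x
      simp only [Finset.mem_filter, Finset.mem_inter]
      tauto
    rw [hfe, Finset.sum_const, nsmul_eq_mul]
    rcases (Finset.image g Finset.univ ∩ S).eq_empty_or_nonempty with h | h
    · simp [h]
    · rw [if_pos h, mul_one_div, div_self]
      exact_mod_cast (Finset.card_pos.2 h).ne'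
  simp only [step1]
  rw [Finset.sum_boole]
  congr 1
  have hcompl : Finset.univ.filter
      (fun g : Fin d → Fin n => ¬ (Finset.image g Finset.univ ∩ S).Nonempty)
      = Fintype.piFinset (fun _ : Fin d => Sᶜ) := by
    ext g
    simp [Finset.not_nonempty_iff_eq_empty, Finset.eq_empty_iff_forall_notMem]
  have htot := Finset.card_filter_add_card_filter_not
    (s := (Finset.univ : Finset (Fin d → Fin n)))
    (p := fun g => (Finset.image g Finset.univ ∩ S).Nonempty)
  rw [hcompl] at htot
  have h1 : (Fintype.piFinset (fun _ : Fin d => Sᶜ)).card = (n - k) ^ d := by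
    rw [Fintype.card_piFinset]
    simp [Finset.card_compl, hS]
  have h2 : (Finset.univ : Finset (Fin d → Fin n)).card = n ^ d := by
    simp
  rw [h1, h2] at htot
  omega

theorem stmt3 (n d k : ℕ) (hn : 1 ≤ n) (hk : 1 ≤ k)
    (S : Finset (Fin n)) (hS : S.card = k) (j : Fin n) (hj : j ∈ S) :
    (1 / (n : ℝ) ^ d) *
        ∑ g ∈ Finset.univ.filter
            (fun g : Fin d → Fin n => j ∈ Finset.image g Finset.univ ∩ S),
          (1 / ((Finset.image g Finset.univ ∩ S).card : ℝ))
      = (1 / (k : ℝ)) * (1 - (((n : ℝ) - (k : ℝ)) / (n : ℝ)) ^ d) := by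
  have hkn : k ≤ n := by
    have := Finset.card_le_card (Finset.subset_univ S)
    simpa [hS] using this
  have key := count_lemma n d k S hS
  have hsym : ∀ j' ∈ S, ∑ g ∈ Finset.univ.filter
        (fun g : Fin d → Fin n => j' ∈ Finset.image g Finset.univ ∩ S),
      (1 / ((Finset.image g Finset.univ ∩ S).card : ℝ))
      = ∑ g ∈ Finset.univ.filter
        (fun g : Fin d → Fin n => j ∈ Finset.image g Finset.univ ∩ S),
      (1 / ((Finset.image g Finset.univ ∩ S).card : ℝ)) :=
    fun j' hj' => sym S j' j hj' hj
  rw [Finset.sum_congr rfl hsym, Finset.sum_const, hS, nsmul_eq_mul] at key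
  have hk0 : (k : ℝ) ≠ 0 := by positivity
  have hn0 : (n : ℝ) ≠ 0 := by positivity
  have hF : ∑ g ∈ Finset.univ.filter
        (fun g : Fin d → Fin n => j ∈ Finset.image g Finset.univ ∩ S),
      (1 / ((Finset.image g Finset.univ ∩ S).card : ℝ))
      = ((n ^ d - (n - k) ^ d : ℕ) : ℝ) / k := by
    rw [eq_div_iff hk0]
    linarith [key]
  have hle : (n - k) ^ d ≤ n ^ d := Nat.pow_le_pow_left (Nat.sub_le n k) d
  rw [hF, Nat.cast_sub hle, Nat.cast_pow, Nat.cast_pow, Nat.cast_sub hkn, div_pow]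
  have hnd : (n : ℝ) ^ d ≠ 0 := by positivity
  field_simp
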